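/- Let 0 < q < 1 and let h : ℝ → ℝ be 2π-periodic and integrable on [0,2π]. Set A₀ = (1/π)·∫₀^{2π} h(τ) dτ, and for each k ≥ 1 set A_k = (1/(π(1+q^(2k))))·∫₀^{2π} h(τ)·cos(kτ) dτ and B_k = (1/(π(1−q^(2k))))·∫₀^{2π} h(τ)·sin(kτ) dτ. Define f(r,θ) = A₀/2 + ∑_{k=1}^∞ [A_k·(r^k + q^(2k)·r^(−k))·cos(kθ) + B_k·(r^k − q^(2k)·r^(−k))·sin(kθ)]. Then f satisfies the polar Laplace equation ∂²f/∂r² + (1/r)·∂f/∂r + (1/r²)·∂²f/∂θ² = 0 at every point (r,θ) with q² < r < 1 and θ ∈ ℝ. -/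

import Mathlib

open Real

noncomputable section

noncomputable def Fser (A B : ℕ → ℝ) (q θ : ℝ) (k : ℕ) (r : ℝ) : ℝ :=
  A (k + 1) * (r ^ (k + 1) + q ^ (2 * (k + 1)) * r ^ (-((k : ℤ) + 1)))
      * Real.cos (((k : ℝ) + 1) * θ)
    + B (k + 1) * (r ^ (k + 1) - q ^ (2 * (k + 1)) * r ^ (-((k : ℤ) + 1)))
      * Real.sin (((k : ℝ) + 1) * θ)

noncomputable def F1ser (A B : ℕ → ℝ) (q θ : ℝ) (k : ℕ) (r : ℝ) : ℝ :=
  A (k + 1) * (((k:ℝ)+1) * r ^ k - q ^ (2 * (k + 1)) * (((k:ℝ)+1) * r ^ (-((k : ℤ) + 1) - 1)))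
      * Real.cos (((k : ℝ) + 1) * θ)
    + B (k + 1) * (((k:ℝ)+1) * r ^ k + q ^ (2 * (k + 1)) * (((k:ℝ)+1) * r ^ (-((k : ℤ) + 1) - 1)))
      * Real.sin (((k : ℝ) + 1) * θ)

noncomputable def F2ser (A B : ℕ → ℝ) (q θ : ℝ) (k : ℕ) (r : ℝ) : ℝ :=
  A (k + 1) * (((k:ℝ)+1) * ((k:ℝ) * r ^ (k-1))
      + q ^ (2 * (k + 1)) * (((k:ℝ)+1) * (((k:ℝ)+2) * r ^ (-((k : ℤ) + 1) - 1 - 1))))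
      * Real.cos (((k : ℝ) + 1) * θ)
    + B (k + 1) * (((k:ℝ)+1) * ((k:ℝ) * r ^ (k-1))
      - q ^ (2 * (k + 1)) * (((k:ℝ)+1) * (((k:ℝ)+2) * r ^ (-((k : ℤ) + 1) - 1 - 1))))
      * Real.sin (((k : ℝ) + 1) * θ)

noncomputable def G1ser (A B : ℕ → ℝ) (q r : ℝ) (k : ℕ) (t : ℝ) : ℝ :=
  A (k + 1) * (r ^ (k + 1) + q ^ (2 * (k + 1)) * r ^ (-((k : ℤ) + 1)))
      * (-Real.sin (((k : ℝ) + 1) * t) * ((k:ℝ)+1))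
    + B (k + 1) * (r ^ (k + 1) - q ^ (2 * (k + 1)) * r ^ (-((k : ℤ) + 1)))
      * (Real.cos (((k : ℝ) + 1) * t) * ((k:ℝ)+1))

noncomputable def G2ser (A B : ℕ → ℝ) (q r : ℝ) (k : ℕ) (t : ℝ) : ℝ :=
  A (k + 1) * (r ^ (k + 1) + q ^ (2 * (k + 1)) * r ^ (-((k : ℤ) + 1)))
      * (-(Real.cos (((k : ℝ) + 1) * t) * ((k:ℝ)+1)) * ((k:ℝ)+1))
    + B (k + 1) * (r ^ (k + 1) - q ^ (2 * (k + 1)) * r ^ (-((k : ℤ) + 1)))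
      * (-Real.sin (((k : ℝ) + 1) * t) * ((k:ℝ)+1) * ((k:ℝ)+1))

lemma hasDerivAt_Fser (A B : ℕ → ℝ) (q θ : ℝ) (k : ℕ) {r : ℝ} (hr : r ≠ 0) :
    HasDerivAt (fun r' => Fser A B q θ k r') (F1ser A B q θ k r) r := by
  have h1 := hasDerivAt_pow (k+1) r
  have h2 := hasDerivAt_zpow (-((k:ℤ)+1)) r (Or.inl hr)
  have h := (((h1.add (h2.const_mul (q ^ (2*(k+1))))).const_mul (A (k+1))).mul_const
      (Real.cos (((k:ℝ)+1)*θ))).add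
    (((h1.sub (h2.const_mul (q ^ (2*(k+1))))).const_mul (B (k+1))).mul_const
      (Real.sin (((k:ℝ)+1)*θ)))
  simp only [Fser]
  refine h.congr_deriv ?_
  simp only [F1ser, Nat.add_sub_cancel]
  push_cast
  ring

lemma hasDerivAt_F1ser (A B : ℕ → ℝ) (q θ : ℝ) (k : ℕ) {r : ℝ} (hr : r ≠ 0) :
    HasDerivAt (fun r' => F1ser A B q θ k r') (F2ser A B q θ k r) r := by
  have h1 := (hasDerivAt_pow k r).const_mul ((k:ℝ)+1)
  have h2 := ((hasDerivAt_zpow (-((k:ℤ)+1) - 1) r (Or.inl hr)).const_mul ((k:ℝ)+1)).const_mul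
    (q ^ (2*(k+1)))
  have h := (((h1.sub h2).const_mul (A (k+1))).mul_const (Real.cos (((k:ℝ)+1)*θ))).add
    (((h1.add h2).const_mul (B (k+1))).mul_const (Real.sin (((k:ℝ)+1)*θ)))
  simp only [F1ser]
  refine h.congr_deriv ?_
  simp only [F2ser]
  push_cast
  ring

lemma hasDerivAt_Gser (A B : ℕ → ℝ) (q r : ℝ) (k : ℕ) (θ : ℝ) :
    HasDerivAt (fun t => Fser A B q t k r) (G1ser A B q r k θ) θ := by
  have hlin : HasDerivAt (fun t : ℝ => ((k:ℝ)+1) * t) ((k:ℝ)+1) θ := by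
    simpa using (hasDerivAt_id θ).const_mul ((k:ℝ)+1)
  have h := (hlin.cos.const_mul
      (A (k+1) * (r ^ (k+1) + q ^ (2*(k+1)) * r ^ (-((k:ℤ)+1))))).add
    (hlin.sin.const_mul (B (k+1) * (r ^ (k+1) - q ^ (2*(k+1)) * r ^ (-((k:ℤ)+1)))))
  simp only [Fser, G1ser]
  exact h

lemma hasDerivAt_G1ser (A B : ℕ → ℝ) (q r : ℝ) (k : ℕ) (θ : ℝ) :
    HasDerivAt (fun t => G1ser A B q r k t) (G2ser A B q r k θ) θ := by
  have hlin : HasDerivAt (fun t : ℝ => ((k:ℝ)+1) * t) ((k:ℝ)+1) θ := by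
    simpa using (hasDerivAt_id θ).const_mul ((k:ℝ)+1)
  have h := (((hlin.sin.neg).mul_const ((k:ℝ)+1)).const_mul
      (A (k+1) * (r ^ (k+1) + q ^ (2*(k+1)) * r ^ (-((k:ℤ)+1))))).add
    (((hlin.cos.mul_const ((k:ℝ)+1))).const_mul
      (B (k+1) * (r ^ (k+1) - q ^ (2*(k+1)) * r ^ (-((k:ℤ)+1)))))
  simp only [G1ser, G2ser]
  exact h

lemma per_term (A B : ℕ → ℝ) (q θ : ℝ) (k : ℕ) {r : ℝ} (hr : r ≠ 0) :
    F2ser A B q θ k r + (1/r) * F1ser A B q θ k r + (1/r^2) * G2ser A B q r k θ = 0 := by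
  have hz0 : r ^ (-((k:ℤ)+1)) = (r^k * r)⁻¹ := by
    rw [zpow_neg, zpow_add₀ hr, zpow_natCast, zpow_one]
  have hz1 : r ^ (-((k:ℤ)+1) - 1) = (r^k * r * r)⁻¹ := by
    rw [zpow_sub₀ hr, hz0, zpow_one, div_eq_mul_inv, ← mul_inv]
  have hz2 : r ^ (-((k:ℤ)+1) - 1 - 1) = (r^k * r * r * r)⁻¹ := by
    rw [zpow_sub₀ hr, hz1, zpow_one, div_eq_mul_inv, ← mul_inv]
  have hk1 : (k:ℝ) * r ^ (k-1) = (k:ℝ) * r^k * r⁻¹ := by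
    cases k with
    | zero => simp
    | succ n =>
      rw [Nat.succ_sub_one]
      push_cast
      field_simp [pow_succ]
      ring
  simp only [F2ser, F1ser, G2ser]
  rw [hz0, hz1, hz2, hk1, pow_succ]
  field_simp
  ring

lemma summable_geom_deg (p : ℕ) {x : ℝ} (h0 : 0 ≤ x) (h1 : x < 1) :
    Summable (fun k : ℕ => ((k:ℝ)+1)^p * x ^ k) := by
  rcases eq_or_lt_of_le h0 with h|h
  · apply summable_of_ne_finset_zero (s := {0})
    intro k hk
    simp only [Finset.mem_singleton] at hk
    rw [← h, zero_pow hk, mul_zero]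
  · have hn : ‖x‖ < 1 := by rwa [Real.norm_eq_abs, abs_of_nonneg h0]
    have H := summable_pow_mul_geometric_of_norm_lt_one p hn
    have H2 := (summable_nat_add_iff 1).2 H
    have H3 := H2.mul_left x⁻¹
    refine H3.congr fun k => ?_
    push_cast
    rw [pow_succ]
    field_simp

lemma abs_comb₁ {c₁ c₂ x₁ y₁ x₂ y₂ t₁ t₂ M X Y κ : ℝ}
    (hc₁ : |c₁| ≤ M) (hc₂ : |c₂| ≤ M) (ht₁ : |t₁| ≤ κ) (ht₂ : |t₂| ≤ κ)
    (hx₁ : |x₁| ≤ X) (hy₁ : |y₁| ≤ Y) (hx₂ : |x₂| ≤ X) (hy₂ : |y₂| ≤ Y) :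
    |c₁ * (x₁ + y₁) * t₁ + c₂ * (x₂ - y₂) * t₂| ≤ 2 * (M * (X + Y) * κ) := by
  have hM : 0 ≤ M := (abs_nonneg _).trans hc₁
  have hX : 0 ≤ X := (abs_nonneg _).trans hx₁
  have hY : 0 ≤ Y := (abs_nonneg _).trans hy₁
  have hκ : 0 ≤ κ := (abs_nonneg _).trans ht₁
  have e1 : |c₁ * (x₁ + y₁) * t₁| ≤ M * (X + Y) * κ := by
    rw [abs_mul, abs_mul]
    exact mul_le_mul (mul_le_mul hc₁ ((abs_add_le _ _).trans (add_le_add hx₁ hy₁))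
      (abs_nonneg _) hM) ht₁ (abs_nonneg _) (by positivity)
  have e2 : |c₂ * (x₂ - y₂) * t₂| ≤ M * (X + Y) * κ := by
    rw [abs_mul, abs_mul]
    exact mul_le_mul (mul_le_mul hc₂ ((abs_sub _ _).trans (add_le_add hx₂ hy₂))
      (abs_nonneg _) hM) ht₂ (abs_nonneg _) (by positivity)
  calc |c₁ * (x₁ + y₁) * t₁ + c₂ * (x₂ - y₂) * t₂|
      ≤ |c₁ * (x₁ + y₁) * t₁| + |c₂ * (x₂ - y₂) * t₂| := abs_add_le _ _
    _ ≤ M * (X + Y) * κ + M * (X + Y) * κ := add_le_add e1 e2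
    _ = 2 * (M * (X + Y) * κ) := by ring

lemma abs_comb₂ {c₁ c₂ x₁ y₁ x₂ y₂ t₁ t₂ M X Y κ : ℝ}
    (hc₁ : |c₁| ≤ M) (hc₂ : |c₂| ≤ M) (ht₁ : |t₁| ≤ κ) (ht₂ : |t₂| ≤ κ)
    (hx₁ : |x₁| ≤ X) (hy₁ : |y₁| ≤ Y) (hx₂ : |x₂| ≤ X) (hy₂ : |y₂| ≤ Y) :
    |c₁ * (x₁ - y₁) * t₁ + c₂ * (x₂ + y₂) * t₂| ≤ 2 * (M * (X + Y) * κ) := by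
  have h := abs_comb₁ (y₁ := -y₁) (y₂ := -y₂) (Y := Y) hc₁ hc₂ ht₁ ht₂ hx₁
    (by rwa [abs_neg]) hx₂ (by rwa [abs_neg])
  calc |c₁ * (x₁ - y₁) * t₁ + c₂ * (x₂ + y₂) * t₂|
      = |c₁ * (x₁ + -y₁) * t₁ + c₂ * (x₂ - -y₂) * t₂| := by ring_nf
    _ ≤ 2 * (M * (X + Y) * κ) := h

lemma aux_zpow_bound {q a r' : ℝ} (ha : 0 < a) (hqa : q^2 ≤ a) (har : a ≤ r') (k j : ℕ) :
    q ^ (2*(k+1)) * (r' ^ (k+1+j))⁻¹ ≤ (q^2/a)^k * (a⁻¹)^j ∧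
      0 ≤ q ^ (2*(k+1)) * (r' ^ (k+1+j))⁻¹ := by
  have hr' : 0 < r' := lt_of_lt_of_le ha har
  constructor
  · calc q ^ (2*(k+1)) * (r' ^ (k+1+j))⁻¹ = (q^2)^(k+1) * (r'^(k+1+j))⁻¹ := by rw [pow_mul]
      _ ≤ (q^2)^(k+1) * (a^(k+1+j))⁻¹ := by
          have h1 : a^(k+1+j) ≤ r'^(k+1+j) := pow_le_pow_left₀ ha.le har _
          have h2 : (r'^(k+1+j))⁻¹ ≤ (a^(k+1+j))⁻¹ :=
            inv_anti₀ (pow_pos ha _) h1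
          exact mul_le_mul_of_nonneg_left h2 (by positivity)
      _ = (q^2/a)^k * (a⁻¹)^j * (q^2/a) := by
          rw [div_pow, inv_pow]
          field_simp
          ring
      _ ≤ (q^2/a)^k * (a⁻¹)^j * 1 := by
          have : q^2/a ≤ 1 := (div_le_one ha).2 hqa
          exact mul_le_mul_of_nonneg_left this
            (mul_nonneg (pow_nonneg (by positivity) k) (pow_nonneg (inv_nonneg.2 ha.le) j))
      _ = (q^2/a)^k * (a⁻¹)^j := mul_one _
  · rw [pow_mul]
    positivity

lemma aux_pow_le {r' b : ℝ} (h0 : 0 ≤ r') (hb : r' ≤ b) (hb1 : b ≤ 1) (k : ℕ) :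
    r' ^ (k+1) ≤ b ^ k := by
  calc r'^(k+1) ≤ b^(k+1) := pow_le_pow_left₀ h0 hb _
    _ = b^k * b := pow_succ b k
    _ ≤ b^k * 1 := mul_le_mul_of_nonneg_left hb1 (pow_nonneg (h0.trans hb) k)
    _ = b^k := mul_one _

lemma aux_pow_le3 {r' b : ℝ} (h0 : 0 ≤ r') (hb : r' ≤ b) (hb0 : 0 < b) (k : ℕ) :
    (k:ℝ) * r' ^ (k-1) ≤ ((k:ℝ)+1) * (b^k * b⁻¹) := by
  cases k with
  | zero => simp; positivity
  | succ n =>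
    rw [Nat.succ_sub_one]
    have hbn : b^(n+1) * b⁻¹ = b^n := by
      rw [pow_succ]
      field_simp
    rw [hbn]
    push_cast
    have h1 : r'^n ≤ b^n := pow_le_pow_left₀ h0 hb n
    have h2 : (0:ℝ) ≤ n := Nat.cast_nonneg n
    nlinarith [pow_nonneg h0 n, pow_nonneg (h0.trans hb) n]

/-- the Fourier series solution of the Dirichlet problem in the
annulus satisfies the polar Laplace equation for `q² < r < 1`. -/
theorem annulus_series_harmonic
    (q : ℝ) (hq0 : 0 < q) (hq1 : q < 1)
    (h : ℝ → ℝ) (hper : Function.Periodic h (2 * π))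
    (hint : IntervalIntegrable h MeasureTheory.volume 0 (2 * π))
    (A B : ℕ → ℝ)
    (hA0 : A 0 = (1 / π) * ∫ τ in (0 : ℝ)..(2 * π), h τ)
    (hA : ∀ k : ℕ, 1 ≤ k → A k =
      (1 / (π * (1 + q ^ (2 * k)))) * ∫ τ in (0 : ℝ)..(2 * π), h τ * Real.cos (k * τ))
    (hB : ∀ k : ℕ, 1 ≤ k → B k =
      (1 / (π * (1 - q ^ (2 * k)))) * ∫ τ in (0 : ℝ)..(2 * π), h τ * Real.sin (k * τ))
    (f : ℝ → ℝ → ℝ)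
    (hf : ∀ r θ : ℝ, f r θ = A 0 / 2 + ∑' k : ℕ,
      (A (k + 1) * (r ^ (k + 1) + q ^ (2 * (k + 1)) * r ^ (-((k : ℤ) + 1)))
          * Real.cos (((k : ℝ) + 1) * θ)
        + B (k + 1) * (r ^ (k + 1) - q ^ (2 * (k + 1)) * r ^ (-((k : ℤ) + 1)))
          * Real.sin (((k : ℝ) + 1) * θ)))
    (r θ : ℝ) (hr1 : q ^ 2 < r) (hr2 : r < 1) :
    deriv (fun r' => deriv (fun r'' => f r'' θ) r') r
      + (1 / r) * deriv (fun r' => f r' θ) r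
      + (1 / r ^ 2) * deriv (fun θ' => deriv (fun θ'' => f r θ'') θ') θ = 0 := by
  have hπ : (0:ℝ) < π := Real.pi_pos
  have hq2pos : (0:ℝ) < q^2 := by positivity
  have hr0 : 0 < r := hq2pos.trans hr1
  have hrne : r ≠ 0 := ne_of_gt hr0
  have hq2 : (0:ℝ) < 1 - q^2 := by nlinarith
  set M := 1 / (π * (1 - q^2)) * ∫ τ in (0:ℝ)..(2*π), |h τ| with hMdef
  have hI0 : 0 ≤ ∫ τ in (0:ℝ)..(2*π), |h τ| :=
    intervalIntegral.integral_nonneg (by positivity) (fun x _ => abs_nonneg _)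
  have key : ∀ g : ℝ → ℝ, Continuous g → (∀ x, |g x| ≤ 1) →
      |∫ τ in (0:ℝ)..(2*π), h τ * g τ| ≤ ∫ τ in (0:ℝ)..(2*π), |h τ| := by
    intro g hg hg1
    have hint2 : IntervalIntegrable (fun τ => h τ * g τ) MeasureTheory.volume 0 (2*π) :=
      hint.mul_continuousOn hg.continuousOn
    calc |∫ τ in (0:ℝ)..(2*π), h τ * g τ| ≤ ∫ τ in (0:ℝ)..(2*π), |h τ * g τ| :=
        intervalIntegral.abs_integral_le_integral_abs (by positivity)
      _ ≤ ∫ τ in (0:ℝ)..(2*π), |h τ| := by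
        apply intervalIntegral.integral_mono_on (by positivity) hint2.abs hint.abs
        intro x _
        rw [abs_mul]
        exact mul_le_of_le_one_right (abs_nonneg _) (hg1 x)
  have hMA : ∀ k : ℕ, |A (k+1)| ≤ M := by
    intro k
    rw [hA (k+1) (by omega), abs_mul,
      abs_of_pos (show (0:ℝ) < 1 / (π * (1 + q ^ (2*(k+1)))) by positivity)]
    have h2 : 1 / (π * (1 + q ^ (2*(k+1)))) ≤ 1 / (π * (1 - q^2)) := by
      apply one_div_le_one_div_of_le (by positivity)
      have hk : (0:ℝ) ≤ q ^ (2*(k+1)) := by positivity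
      nlinarith
    have h3 := key (fun τ => Real.cos ((((k+1):ℕ):ℝ) * τ))
      (Real.continuous_cos.comp (continuous_const.mul continuous_id))
      (fun x => Real.abs_cos_le_one _)
    rw [hMdef]
    exact mul_le_mul h2 h3 (abs_nonneg _) (by positivity)
  have hMB : ∀ k : ℕ, |B (k+1)| ≤ M := by
    intro k
    have hqk1 : q ^ (2*(k+1)) < 1 := pow_lt_one₀ hq0.le hq1 (by omega)
    have hqk2 : q ^ (2*(k+1)) ≤ q^2 := pow_le_pow_of_le_one hq0.le hq1.le (by omega)
    rw [hB (k+1) (by omega), abs_mul,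
      abs_of_pos (show (0:ℝ) < 1 / (π * (1 - q ^ (2*(k+1)))) by
        have : (0:ℝ) < 1 - q ^ (2*(k+1)) := by linarith
        positivity)]
    have h2 : 1 / (π * (1 - q ^ (2*(k+1)))) ≤ 1 / (π * (1 - q^2)) := by
      apply one_div_le_one_div_of_le (by positivity)
      nlinarith
    have h3 := key (fun τ => Real.sin ((((k+1):ℕ):ℝ) * τ))
      (Real.continuous_sin.comp (continuous_const.mul continuous_id))
      (fun x => Real.abs_sin_le_one _)
    rw [hMdef]
    exact mul_le_mul h2 h3 (abs_nonneg _) (by positivity)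
  have hM0 : 0 ≤ M := (abs_nonneg _).trans (hMA 0)
  -- the geometric window
  set a := (q^2 + r)/2 with hadef
  set b := (r + 1)/2 with hbdef
  have ha1 : q^2 < a := by rw [hadef]; linarith
  have ha0 : 0 < a := hq2pos.trans ha1
  have ha2 : a < r := by rw [hadef]; linarith
  have hb1 : r < b := by rw [hbdef]; linarith
  have hb2 : b < 1 := by rw [hbdef]; linarith
  have hb0 : 0 < b := hr0.trans hb1
  have hrs : r ∈ Set.Ioo a b := ⟨ha2, hb1⟩
  have hYa0 : (0:ℝ) ≤ q^2/a := by positivity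
  have hYa1 : q^2/a < 1 := (div_lt_one ha0).2 ha1
  have hz0 : (0:ℝ) ≤ q^2/r := by positivity
  have hz1 : q^2/r < 1 := (div_lt_one hr0).2 hr1
  -- bounds on the annulus window
  have hbF : ∀ (k:ℕ), ∀ r' ∈ Set.Ioo a b,
      ‖Fser A B q θ k r'‖ ≤ 2*(M*(b^k + (q^2/a)^k)*1) := by
    intro k r' hr'
    have hr'0 : 0 < r' := ha0.trans hr'.1
    rw [Real.norm_eq_abs]
    simp only [Fser]
    have hzc : r' ^ (-((k:ℤ)+1)) = (r'^(k+1+0))⁻¹ := by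
      rw [show -((k:ℤ)+1) = -(((k+1+0:ℕ)):ℤ) by push_cast; ring, zpow_neg, zpow_natCast]
    have hx : |r'^(k+1)| ≤ b^k := by
      rw [abs_of_nonneg (by positivity)]
      exact aux_pow_le hr'0.le hr'.2.le hb2.le k
    have hy : |q^(2*(k+1)) * r'^(-((k:ℤ)+1))| ≤ (q^2/a)^k := by
      rw [hzc, abs_of_nonneg (aux_zpow_bound ha0 ha1.le hr'.1.le k 0).2]
      simpa using (aux_zpow_bound ha0 ha1.le hr'.1.le k 0).1
    exact abs_comb₁ (hMA k) (hMB k) (Real.abs_cos_le_one _) (Real.abs_sin_le_one _) hx hy hx hy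
  have hbF1 : ∀ (k:ℕ), ∀ r' ∈ Set.Ioo a b,
      ‖F1ser A B q θ k r'‖ ≤
        2*(M*((((k:ℝ)+1)*b^k) + (((k:ℝ)+1)*((q^2/a)^k * a⁻¹)))*1) := by
    intro k r' hr'
    have hr'0 : 0 < r' := ha0.trans hr'.1
    rw [Real.norm_eq_abs]
    simp only [F1ser]
    have hx : |((k:ℝ)+1) * r'^k| ≤ ((k:ℝ)+1)*b^k := by
      rw [abs_of_nonneg (by positivity)]
      exact mul_le_mul_of_nonneg_left (pow_le_pow_left₀ hr'0.le hr'.2.le k) (by positivity)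
    have hy : |q^(2*(k+1)) * (((k:ℝ)+1) * r'^(-((k:ℤ)+1)-1))| ≤ ((k:ℝ)+1)*((q^2/a)^k * a⁻¹) := by
      have hzc : r' ^ (-((k:ℤ)+1)-1) = (r'^(k+1+1))⁻¹ := by
        rw [show -((k:ℤ)+1)-1 = -(((k+1+1:ℕ)):ℤ) by push_cast; ring, zpow_neg, zpow_natCast]
      rw [hzc, abs_of_nonneg (by positivity)]
      calc q^(2*(k+1)) * (((k:ℝ)+1) * (r'^(k+1+1))⁻¹)
          = ((k:ℝ)+1) * (q^(2*(k+1)) * (r'^(k+1+1))⁻¹) := by ring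
        _ ≤ ((k:ℝ)+1) * ((q^2/a)^k * a⁻¹) := by
            refine mul_le_mul_of_nonneg_left ?_ (by positivity)
            simpa using (aux_zpow_bound ha0 ha1.le hr'.1.le k 1).1
    exact abs_comb₂ (hMA k) (hMB k) (Real.abs_cos_le_one _) (Real.abs_sin_le_one _) hx hy hx hy
  have hbF2 : ∀ (k:ℕ), ∀ r' ∈ Set.Ioo a b,
      ‖F2ser A B q θ k r'‖ ≤
        2*(M*((((k:ℝ)+1)*(((k:ℝ)+1)*(b^k * b⁻¹)))
          + (((k:ℝ)+1)*(((k:ℝ)+2)*((q^2/a)^k * (a⁻¹)^2))))*1) := by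
    intro k r' hr'
    have hr'0 : 0 < r' := ha0.trans hr'.1
    rw [Real.norm_eq_abs]
    simp only [F2ser]
    have hx : |((k:ℝ)+1) * ((k:ℝ) * r'^(k-1))| ≤ ((k:ℝ)+1)*(((k:ℝ)+1)*(b^k * b⁻¹)) := by
      rw [abs_of_nonneg (by positivity)]
      exact mul_le_mul_of_nonneg_left (aux_pow_le3 hr'0.le hr'.2.le hb0 k) (by positivity)
    have hy : |q^(2*(k+1)) * (((k:ℝ)+1) * (((k:ℝ)+2) * r'^(-((k:ℤ)+1)-1-1)))|
        ≤ ((k:ℝ)+1)*(((k:ℝ)+2)*((q^2/a)^k * (a⁻¹)^2)) := by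
      have hzc : r' ^ (-((k:ℤ)+1)-1-1) = (r'^(k+1+2))⁻¹ := by
        rw [show -((k:ℤ)+1)-1-1 = -(((k+1+2:ℕ)):ℤ) by push_cast; ring, zpow_neg, zpow_natCast]
      rw [hzc, abs_of_nonneg (by positivity)]
      calc q^(2*(k+1)) * (((k:ℝ)+1) * (((k:ℝ)+2) * (r'^(k+1+2))⁻¹))
          = ((k:ℝ)+1) * (((k:ℝ)+2) * (q^(2*(k+1)) * (r'^(k+1+2))⁻¹)) := by ring
        _ ≤ ((k:ℝ)+1) * (((k:ℝ)+2) * ((q^2/a)^k * (a⁻¹)^2)) := by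
            refine mul_le_mul_of_nonneg_left
              (mul_le_mul_of_nonneg_left ?_ (by positivity)) (by positivity)
            exact (aux_zpow_bound ha0 ha1.le hr'.1.le k 2).1
    exact abs_comb₁ (hMA k) (hMB k) (Real.abs_cos_le_one _) (Real.abs_sin_le_one _) hx hy hx hy
  -- bounds in the angular direction
  have hxθ : ∀ k : ℕ, |r^(k+1)| ≤ r^k := by
    intro k
    rw [abs_of_nonneg (by positivity)]
    exact aux_pow_le hr0.le le_rfl hr2.le k
  have hyθ : ∀ k : ℕ, |q^(2*(k+1)) * r^(-((k:ℤ)+1))| ≤ (q^2/r)^k := by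
    intro k
    have hzc : r ^ (-((k:ℤ)+1)) = (r^(k+1+0))⁻¹ := by
      rw [show -((k:ℤ)+1) = -(((k+1+0:ℕ)):ℤ) by push_cast; ring, zpow_neg, zpow_natCast]
    rw [hzc, abs_of_nonneg (aux_zpow_bound hr0 hr1.le le_rfl k 0).2]
    simpa using (aux_zpow_bound hr0 hr1.le le_rfl k 0).1
  have hbG1 : ∀ (k:ℕ) (t : ℝ),
      ‖G1ser A B q r k t‖ ≤ 2*(M*(r^k + (q^2/r)^k)*((k:ℝ)+1)) := by
    intro k t
    rw [Real.norm_eq_abs]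
    simp only [G1ser]
    have ht1 : |-Real.sin (((k:ℝ)+1)*t) * ((k:ℝ)+1)| ≤ (k:ℝ)+1 := by
      rw [abs_mul, abs_neg, abs_of_nonneg (show (0:ℝ) ≤ (k:ℝ)+1 by positivity)]
      exact mul_le_of_le_one_left (by positivity) (Real.abs_sin_le_one _)
    have ht2 : |Real.cos (((k:ℝ)+1)*t) * ((k:ℝ)+1)| ≤ (k:ℝ)+1 := by
      rw [abs_mul, abs_of_nonneg (show (0:ℝ) ≤ (k:ℝ)+1 by positivity)]
      exact mul_le_of_le_one_left (by positivity) (Real.abs_cos_le_one _)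
    exact abs_comb₁ (hMA k) (hMB k) ht1 ht2 (hxθ k) (hyθ k) (hxθ k) (hyθ k)
  have hbG2 : ∀ (k:ℕ) (t : ℝ),
      ‖G2ser A B q r k t‖ ≤ 2*(M*(r^k + (q^2/r)^k)*(((k:ℝ)+1)*((k:ℝ)+1))) := by
    intro k t
    rw [Real.norm_eq_abs]
    simp only [G2ser]
    have hN : (0:ℝ) ≤ (k:ℝ)+1 := by positivity
    have ht1 : |-(Real.cos (((k:ℝ)+1)*t) * ((k:ℝ)+1)) * ((k:ℝ)+1)|
        ≤ ((k:ℝ)+1)*((k:ℝ)+1) := by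
      rw [abs_mul, abs_neg, abs_mul, abs_of_nonneg hN]
      exact mul_le_mul_of_nonneg_right
        (mul_le_of_le_one_left hN (Real.abs_cos_le_one _)) hN
    have ht2 : |-Real.sin (((k:ℝ)+1)*t) * ((k:ℝ)+1) * ((k:ℝ)+1)|
        ≤ ((k:ℝ)+1)*((k:ℝ)+1) := by
      rw [abs_mul, abs_mul, abs_neg, abs_of_nonneg hN]
      exact mul_le_mul_of_nonneg_right
        (mul_le_of_le_one_left hN (Real.abs_sin_le_one _)) hN
    exact abs_comb₁ (hMA k) (hMB k) ht1 ht2 (hxθ k) (hyθ k) (hxθ k) (hyθ k)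
  -- summability of the bounds
  have Su0 : Summable (fun k : ℕ => 2*(M*(b^k + (q^2/a)^k)*1)) := by
    refine (((summable_geom_deg 0 hb0.le hb2).add
      (summable_geom_deg 0 hYa0 hYa1)).mul_left (2*M)).congr fun k => ?_
    ring
  have Su1 : Summable (fun k : ℕ =>
      2*(M*((((k:ℝ)+1)*b^k) + (((k:ℝ)+1)*((q^2/a)^k * a⁻¹)))*1)) := by
    refine (((summable_geom_deg 1 hb0.le hb2).mul_left (2*M)).add
      (((summable_geom_deg 1 hYa0 hYa1)).mul_left (2*M*a⁻¹))).congr fun k => ?_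
    ring
  have Su2 : Summable (fun k : ℕ =>
      2*(M*((((k:ℝ)+1)*(((k:ℝ)+1)*(b^k * b⁻¹)))
        + (((k:ℝ)+1)*(((k:ℝ)+2)*((q^2/a)^k * (a⁻¹)^2))))*1)) := by
    have s1 := (summable_geom_deg 2 hb0.le hb2).mul_left (2*M*b⁻¹)
    have s2 := (summable_geom_deg 2 hYa0 hYa1).mul_left (2*M*(a⁻¹)^2)
    have s3 := (summable_geom_deg 1 hYa0 hYa1).mul_left (2*M*(a⁻¹)^2)
    refine (s1.add (s2.add s3)).congr fun k => ?_
    ring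
  have Suθ1 : Summable (fun k : ℕ => 2*(M*(r^k + (q^2/r)^k)*((k:ℝ)+1))) := by
    refine (((summable_geom_deg 1 hr0.le hr2).mul_left (2*M)).add
      (((summable_geom_deg 1 hz0 hz1)).mul_left (2*M))).congr fun k => ?_
    ring
  have Suθ2 : Summable (fun k : ℕ =>
      2*(M*(r^k + (q^2/r)^k)*(((k:ℝ)+1)*((k:ℝ)+1)))) := by
    refine (((summable_geom_deg 2 hr0.le hr2).mul_left (2*M)).add
      (((summable_geom_deg 2 hz0 hz1)).mul_left (2*M))).congr fun k => ?_
    ring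
  -- summability of the series themselves
  have hFsum : Summable (fun k => Fser A B q θ k r) :=
    Summable.of_norm_bounded Su0 (fun k => hbF k r hrs)
  have hF1sum : Summable (fun k => F1ser A B q θ k r) :=
    Summable.of_norm_bounded Su1 (fun k => hbF1 k r hrs)
  have hF2sum : Summable (fun k => F2ser A B q θ k r) :=
    Summable.of_norm_bounded Su2 (fun k => hbF2 k r hrs)
  have hG1sum : Summable (fun k => G1ser A B q r k θ) :=
    Summable.of_norm_bounded Suθ1 (fun k => hbG1 k θ)
  have hG2sum : Summable (fun k => G2ser A B q r k θ) :=
    Summable.of_norm_bounded Suθ2 (fun k => hbG2 k θ)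
  -- radial derivatives
  have hD1 : ∀ r' ∈ Set.Ioo a b,
      HasDerivAt (fun r'' => f r'' θ) (∑' k, F1ser A B q θ k r') r' := by
    intro r' hr'
    have heq : (fun r'' => f r'' θ) = fun r'' => A 0 / 2 + ∑' k, Fser A B q θ k r'' := by
      funext rr
      rw [hf rr θ]
      rfl
    rw [heq]
    exact (hasDerivAt_tsum_of_isPreconnected Su1 isOpen_Ioo isPreconnected_Ioo
      (fun k y hy => hasDerivAt_Fser A B q θ k (ne_of_gt (ha0.trans hy.1)))
      (fun k y hy => hbF1 k y hy) hrs hFsum hr').const_add (A 0 / 2)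
  have hD2 : HasDerivAt (fun r' => ∑' k, F1ser A B q θ k r') (∑' k, F2ser A B q θ k r) r :=
    hasDerivAt_tsum_of_isPreconnected Su2 isOpen_Ioo isPreconnected_Ioo
      (fun k y hy => hasDerivAt_F1ser A B q θ k (ne_of_gt (ha0.trans hy.1)))
      (fun k y hy => hbF2 k y hy) hrs hF1sum hrs
  have hTermA : deriv (fun r' => deriv (fun r'' => f r'' θ) r') r
      = ∑' k, F2ser A B q θ k r := by
    have hev : (fun r' => deriv (fun r'' => f r'' θ) r')
        =ᶠ[nhds r] fun r' => ∑' k, F1ser A B q θ k r' := by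
      filter_upwards [isOpen_Ioo.mem_nhds hrs] with y hy
      exact (hD1 y hy).deriv
    rw [hev.deriv_eq]
    exact hD2.deriv
  have hTermB : deriv (fun r' => f r' θ) r = ∑' k, F1ser A B q θ k r :=
    (hD1 r hrs).deriv
  -- angular derivatives
  have hDθ1 : ∀ t : ℝ, HasDerivAt (fun θ'' => f r θ'') (∑' k, G1ser A B q r k t) t := by
    intro t
    have heqθ : (fun θ'' => f r θ'') = fun t' => A 0 / 2 + ∑' k, Fser A B q t' k r := by
      funext t'
      rw [hf r t']
      rfl
    rw [heqθ]
    exact (hasDerivAt_tsum Suθ1 (fun k y => hasDerivAt_Gser A B q r k y)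
      (fun k y => hbG1 k y) hFsum t).const_add (A 0 / 2)
  have hDθ2 : HasDerivAt (fun t => ∑' k, G1ser A B q r k t) (∑' k, G2ser A B q r k θ) θ :=
    hasDerivAt_tsum Suθ2 (fun k y => hasDerivAt_G1ser A B q r k y)
      (fun k y => hbG2 k y) hG1sum θ
  have hTermC : deriv (fun θ' => deriv (fun θ'' => f r θ'') θ') θ
      = ∑' k, G2ser A B q r k θ := by
    have heq2 : (fun θ' => deriv (fun θ'' => f r θ'') θ')
        = fun θ' => ∑' k, G1ser A B q r k θ' :=
      funext fun t => (hDθ1 t).deriv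
    rw [heq2]
    exact hDθ2.deriv
  rw [hTermA, hTermB, hTermC, ← tsum_mul_left, ← tsum_mul_left,
    ← Summable.tsum_add hF2sum (hF1sum.mul_left (1/r)),
    ← Summable.tsum_add (hF2sum.add (hF1sum.mul_left (1/r))) (hG2sum.mul_left (1/r^2)),
    tsum_congr (fun k => per_term A B q θ k hrne), tsum_zero]
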